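/- Let F = GF(q) with addition table A and multiplication table M (both q×q matrices over F). Then the q² × (q²+q) matrix [M ⊗ J_{q,q} + J_{q,q} ⊗ A | A ⊗ J_{q,1}] is a q-mosaic in which each element of F appears exactly q+1 times in each row and exactly q times in each column. -/

import Mathlib

lemma filter_sum_card {α β : Type*} [Fintype α] [Fintype β] [DecidableEq α] [DecidableEq β]
    (P : α ⊕ β → Prop) [DecidablePred P] :
    (Finset.univ.filter P).card
      = (Finset.univ.filter (fun a => P (Sum.inl a))).card
        + (Finset.univ.filter (fun b => P (Sum.inr b))).card := by
  rw [← Finset.card_disjSum]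
  congr 1
  ext c
  cases c <;> simp [Finset.mem_disjSum]

/-- For F = GF(q) with addition table A and multiplication table M, the
q² × (q²+q) matrix [M ⊗ J_{q,q} + J_{q,q} ⊗ A | A ⊗ J_{q,1}] is a q-mosaic in
which each element of F appears exactly q+1 times in each row and exactly q
times in each column.  Rows are indexed by (p₁,p₂) ∈ F², the first q² columns
by (x,y) ∈ F² with entry x·p₁ + (y + p₂), and the last q columns by x ∈ F with
entry x + p₁. -/
theorem field_mosaic_row_col_counts (F : Type*) [Field F] [Fintype F] [DecidableEq F] :
    let Mat : F × F → (F × F) ⊕ F → F := fun p c =>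
      Sum.elim (fun xy : F × F => xy.1 * p.1 + (xy.2 + p.2)) (fun x : F => x + p.1) c
    (∀ (e : F) (p : F × F),
      (Finset.univ.filter (fun c : (F × F) ⊕ F => Mat p c = e)).card
        = Fintype.card F + 1) ∧
    (∀ (e : F) (c : (F × F) ⊕ F),
      (Finset.univ.filter (fun p : F × F => Mat p c = e)).card = Fintype.card F) := by
  intro Mat
  constructor
  · intro e p
    rw [filter_sum_card]
    have h1 : (Finset.univ.filter (fun xy : F × F => Mat p (Sum.inl xy) = e))
        = Finset.univ.image (fun x : F => (x, e - x * p.1 - p.2)) := by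
      ext ⟨x, y⟩
      rw [Finset.mem_filter]
      simp only [Finset.mem_filter, Finset.mem_univ, true_and, Finset.mem_image, Mat,
        Sum.elim_inl, Prod.mk.injEq]
      constructor
      · intro h; exact ⟨x, rfl, by linear_combination -h⟩
      · rintro ⟨a, rfl, rfl⟩; ring
    have h2 : (Finset.univ.filter (fun x : F => Mat p (Sum.inr x) = e)) = {e - p.1} := by
      ext x
      rw [Finset.mem_filter]
      simp only [Finset.mem_filter, Finset.mem_univ, true_and, Finset.mem_singleton, Mat,
        Sum.elim_inr]
      constructor <;> intro h <;> [linear_combination h; linear_combination h]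
    rw [h1, h2, Finset.card_singleton, Finset.card_image_of_injective _
      (fun a b hab => (Prod.mk.injEq _ _ _ _ ▸ hab).1), Finset.card_univ]
  · intro e c
    cases c with
    | inl xy =>
      have h1 : (Finset.univ.filter (fun p : F × F => Mat p (Sum.inl xy) = e))
          = Finset.univ.image (fun t : F => (t, e - xy.1 * t - xy.2)) := by
        ext ⟨p1, p2⟩
        rw [Finset.mem_filter]
        simp only [Finset.mem_filter, Finset.mem_univ, true_and, Finset.mem_image, Mat,
          Sum.elim_inl, Prod.mk.injEq]
        constructor
        · intro h; exact ⟨p1, rfl, by linear_combination -h⟩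
        · rintro ⟨a, rfl, rfl⟩; ring
      rw [h1, Finset.card_image_of_injective _
        (fun a b hab => (Prod.mk.injEq _ _ _ _ ▸ hab).1), Finset.card_univ]
    | inr x =>
      have h1 : (Finset.univ.filter (fun p : F × F => Mat p (Sum.inr x) = e))
          = Finset.univ.image (fun t : F => (e - x, t)) := by
        ext ⟨p1, p2⟩
        rw [Finset.mem_filter]
        simp only [Finset.mem_filter, Finset.mem_univ, true_and, Finset.mem_image, Mat,
          Sum.elim_inr, Prod.mk.injEq]
        constructor
        · intro h; exact ⟨p2, by linear_combination -h, rfl⟩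
        · rintro ⟨a, rfl, rfl⟩; ring
      rw [h1, Finset.card_image_of_injective _
        (fun a b hab => (Prod.mk.injEq _ _ _ _ ▸ hab).2), Finset.card_univ]
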